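/- Suppose f : S -> R is differentiable, bounded below by f*, and satisfies the quadratic upper bound |f(Y) - f(X) - <grad f(X), Y - X>| <= (L0 + L1 ||grad f(X)||_*) / 2 * ||X - Y||^2 for all X, Y, where L0, L1 > 0. Then for every X, ||grad f(X)||_*^2 / (2 (L0 + L1 ||grad f(X)||_*)) <= f(X) - f*. -/

import Mathlib

open scoped RealInnerProductSpace

theorem stmt_13 {S : Type*} [NormedAddCommGroup S] [InnerProductSpace ℝ S]
    [FiniteDimensional ℝ S] [CompleteSpace S]
    (N : S → ℝ)
    (hN_add : ∀ x y, N (x + y) ≤ N x + N y)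
    (hN_smul : ∀ (c : ℝ) x, N (c • x) = |c| * N x)
    (hN_zero : ∀ x, N x = 0 ↔ x = 0)
    (Nd : S → ℝ)
    (hNd : ∀ X, Nd X = sSup ((fun Z => ⟪X, Z⟫) '' {Z | N Z ≤ 1}))
    (f : S → ℝ) (hf : Differentiable ℝ f)
    (L0 L1 fstar : ℝ) (hL0 : 0 < L0) (hL1 : 0 < L1)
    (hlow : ∀ X, fstar ≤ f X)
    (hquad : ∀ X Y, |f Y - f X - ⟪gradient f X, Y - X⟫| ≤
      (L0 + L1 * Nd (gradient f X)) / 2 * (N (X - Y)) ^ 2) :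
    ∀ X, (Nd (gradient f X)) ^ 2 / (2 * (L0 + L1 * Nd (gradient f X))) ≤ f X - fstar := by
  intro X
  set g := gradient f X with hg
  set G := Nd g with hG
  have hN0 : N 0 = 0 := (hN_zero 0).mpr rfl
  have hNnonneg : ∀ x, 0 ≤ N x := by
    intro x
    have h1 : N (-x) = N x := by
      have := hN_smul (-1) x
      simpa using this
    have h2 : N 0 ≤ N x + N (-x) := by
      have := hN_add x (-x)
      simpa using this
    rw [hN0, h1] at h2
    linarith
  have hmem0 : (0 : ℝ) ∈ ((fun Z => ⟪g, Z⟫) '' {Z | N Z ≤ 1}) := by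
    exact ⟨0, by simp [hN0], by simp⟩
  have hne : ((fun Z => ⟪g, Z⟫) '' {Z | N Z ≤ 1}).Nonempty := ⟨0, hmem0⟩
  have hGval : G = sSup ((fun Z => ⟪g, Z⟫) '' {Z | N Z ≤ 1}) := hNd g
  have hGnonneg : 0 ≤ G := by
    by_cases hb : BddAbove ((fun Z => ⟪g, Z⟫) '' {Z | N Z ≤ 1})
    · rw [hGval]; exact le_csSup hb hmem0
    · rw [hGval, Real.sSup_of_not_bddAbove hb]
  rcases eq_or_lt_of_le hGnonneg with h0 | hGpos
  · rw [← h0]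
    have := hlow X
    simp
    linarith
  · -- G > 0 case
    set D := L0 + L1 * G with hD
    have hDpos : 0 < D := by positivity
    set t := G / D with ht
    have htpos : 0 < t := div_pos hGpos hDpos
    have htD : t * D = G := div_mul_cancel₀ G (ne_of_gt hDpos)
    apply le_of_forall_pos_le_add
    intro ε hε
    set ε' := ε / t with hε'
    have hε'pos : 0 < ε' := div_pos hε htpos
    have htε : t * ε' = ε := by
      rw [hε']; field_simp
    have hlt : G - ε' < sSup ((fun Z => ⟪g, Z⟫) '' {Z | N Z ≤ 1}) := by
      rw [← hGval]; linarith
    obtain ⟨v, hvmem, hv⟩ := exists_lt_of_lt_csSup hne hlt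
    obtain ⟨Z, hZ, rfl⟩ := hvmem
    simp only [Set.mem_setOf_eq] at hZ
    set Y := X - t • Z with hY
    have hXY : X - Y = t • Z := by rw [hY]; abel
    have hYX : Y - X = -(t • Z) := by rw [hY]; abel
    have hNXY : N (X - Y) ≤ t := by
      rw [hXY, hN_smul]
      rw [abs_of_pos htpos]
      calc t * N Z ≤ t * 1 := by nlinarith
        _ = t := mul_one t
    have hNsq : (N (X - Y)) ^ 2 ≤ t ^ 2 := by
      have := hNnonneg (X - Y)
      nlinarith
    have hip : ⟪g, Y - X⟫ = -(t * ⟪g, Z⟫) := by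
      rw [hYX, inner_neg_right, real_inner_smul_right]
    have hq := hquad X Y
    rw [← hg, ← hG, ← hD, hip] at hq
    have hq2 : f Y - f X + t * ⟪g, Z⟫ ≤ D / 2 * t ^ 2 := by
      have h1 : f Y - f X - -(t * ⟪g, Z⟫) ≤ D / 2 * (N (X - Y)) ^ 2 :=
        le_trans (le_abs_self _) hq
      have h2 : D / 2 * (N (X - Y)) ^ 2 ≤ D / 2 * t ^ 2 := by nlinarith
      linarith
    have hfY : fstar ≤ f Y := hlow Y
    -- combine: G^2/(2D) = D/2 * t^2
    have hGD : G ^ 2 / (2 * D) = D / 2 * t ^ 2 := by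
      rw [← htD]; field_simp
    rw [hGD]
    have h3 : t * (G - ε') ≤ t * ⟪g, Z⟫ := by nlinarith
    have h4 : t * G = D * t ^ 2 := by
      rw [← htD]; ring
    have h5 : t * (G - ε') = t * G - t * ε' := by ring
    have h6 : D / 2 * t ^ 2 = D * t ^ 2 / 2 := by ring
    clear_value G D t ε'
    linarith [hq2, hfY, h3, h4, h5, h6, htε]
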